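/- Let R be a commutative ring and m a positive integer whose image in R is a unit. Then the canonical ring homomorphism R[X]/(X^m − 1) → ∏_{d ∣ m} R[X]/(Φ_d(X)), induced by the quotient projections and indexed by the positive divisors d of m, is an isomorphism of rings. -/

import Mathlib

open Polynomial

/-- If `m` is invertible in `R`, then the canonical ring homomorphism
`R[X]/(X^m - 1) → ∏_{d ∣ m} R[X]/(Φ_d)` (induced by the quotient projections) is an
isomorphism. -/
theorem stmt13 {R : Type*} [CommRing R] (m : ℕ) (hm : 0 < m) (hu : IsUnit (m : R)) :
    ∃ e : (R[X] ⧸ Ideal.span {(X : R[X]) ^ m - 1}) ≃+*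
        ((d : m.divisors) → R[X] ⧸ Ideal.span {cyclotomic (d : ℕ) R}),
      ∀ (f : R[X]) (d : m.divisors),
        e (Ideal.Quotient.mk (Ideal.span {(X : R[X]) ^ m - 1}) f) d =
          Ideal.Quotient.mk (Ideal.span {cyclotomic (d : ℕ) R}) f := by
  have hsep : ((X : R[X]) ^ m - 1).Separable := by
    simpa using separable_X_pow_sub_C_unit (1 : Rˣ) hu
  set I : m.divisors → Ideal R[X] := fun d => Ideal.span {cyclotomic (d : ℕ) R} with hI
  have hprod : ∏ d : m.divisors, cyclotomic (d : ℕ) R = (X : R[X]) ^ m - 1 := by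
    rw [Finset.prod_coe_sort m.divisors (fun d => cyclotomic d R)]
    exact prod_cyclotomic_eq_X_pow_sub_one hm R
  have hcop : ∀ (d e : m.divisors), d ≠ e →
      IsCoprime (cyclotomic (d : ℕ) R) (cyclotomic (e : ℕ) R) := by
    intro d e hne
    have hdvd : cyclotomic (d : ℕ) R * cyclotomic (e : ℕ) R ∣ (X : R[X]) ^ m - 1 := by
      rw [← hprod]
      have : ∏ i ∈ ({d, e} : Finset m.divisors), cyclotomic (i : ℕ) R ∣
          ∏ i : m.divisors, cyclotomic (i : ℕ) R :=
        Finset.prod_dvd_prod_of_subset _ _ _ (Finset.subset_univ _)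
      rwa [Finset.prod_pair hne] at this
    exact (hsep.of_dvd hdvd).isCoprime
  have hpair : Pairwise (Function.onFun IsCoprime I) := by
    intro d e hne
    exact (Ideal.isCoprime_span_singleton_iff _ _).mpr (hcop d e hne)
  have hinf : Ideal.span {(X : R[X]) ^ m - 1} = ⨅ d, I d := by
    rw [Ideal.iInf_span_singleton (fun i j h => hcop i j h), hprod]
  refine ⟨(Ideal.quotEquivOfEq hinf).trans (Ideal.quotientInfRingEquivPiQuotient I hpair),
    fun f d => ?_⟩
  rfl
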